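/- Let f_l, f_u, D_u, D_l be real numbers with f_l < 0 < f_u, D_u > 0 and D_l < 0. Then min((f_u − f_l)/D_u, (f_l − f_u)/D_l) ≤ (1 + max(|f_l|/f_u, f_u/|f_l|)) · min(f_u/D_u, f_l/D_l). -/

import Mathlib

/-- The arithmetic inequality behind the bound `Γ_R/Γ_C ≤ 1 + max(|f_l/f_u|, |f_u/f_l|)`:
for `f_l < 0 < f_u`, `D_u > 0` and `D_l < 0`,
`min((f_u-f_l)/D_u, (f_l-f_u)/D_l) ≤ (1 + max(|f_l|/f_u, f_u/|f_l|)) * min(f_u/D_u, f_l/D_l)`. -/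
theorem ratio_upper_bound_arith (fl fu Du Dl : ℝ)
    (hfl : fl < 0) (hfu : 0 < fu) (hDu : 0 < Du) (hDl : Dl < 0) :
    min ((fu - fl) / Du) ((fl - fu) / Dl) ≤
      (1 + max (|fl| / fu) (fu / |fl|)) * min (fu / Du) (fl / Dl) := by
  have hfl' : |fl| = -fl := abs_of_neg hfl
  have hflne : fl ≠ 0 := ne_of_lt hfl
  have hfune : fu ≠ 0 := ne_of_gt hfu
  have hDune : Du ≠ 0 := ne_of_gt hDu
  have hDlne : Dl ≠ 0 := ne_of_lt hDl
  rcases le_total (fu / Du) (fl / Dl) with hm | hm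
  · rw [min_eq_left hm]
    calc min ((fu - fl) / Du) ((fl - fu) / Dl) ≤ (fu - fl) / Du := min_le_left _ _
      _ = (1 + |fl| / fu) * (fu / Du) := by field_simp [hfl']; rw [hfl']; ring
      _ ≤ (1 + max (|fl| / fu) (fu / |fl|)) * (fu / Du) := by
          apply mul_le_mul_of_nonneg_right _ (by positivity)
          gcongr
          exact le_max_left _ _
  · rw [min_eq_right hm]
    have hpos : 0 < fl / Dl := div_pos_of_neg_of_neg hfl hDl
    calc min ((fu - fl) / Du) ((fl - fu) / Dl) ≤ (fl - fu) / Dl := min_le_right _ _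
      _ = (1 + fu / |fl|) * (fl / Dl) := by rw [hfl', div_neg, add_mul, one_mul, neg_mul, div_mul_div_comm, mul_comm fu fl, mul_div_mul_left _ _ hflne]; ring
      _ ≤ (1 + max (|fl| / fu) (fu / |fl|)) * (fl / Dl) := by
          apply mul_le_mul_of_nonneg_right _ hpos.le
          gcongr
          exact le_max_right _ _
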